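/- Let R be a discrete valuation ring with uniformizer π, K its quotient field, L = K(α) a finite separable extension with α integral over R, P ∈ R[X] the minimal polynomial of α, A = R[α], and O_L the integral closure of R in L. Let f ∈ R[X] be monic with f̄ dividing P̄ in k[X], write P = fg + πT with T̄ ≠ 0, and let 𝔞 = πA + f(α)A. Let h, U ∈ R[X] satisfy h̄ = f̄/(f̄, T̄) and Ū = lcm(h̄·ḡ, f̄). Then Stab_L(𝔞) = A + (U(α)/π)A, and this is contained in O_L. -/

import Mathlib

open Polynomial

/-- Polynomials over a field form a normalized GCD monoid in which `gcd` and `lcm` of nonzero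
polynomials are monic. -/
noncomputable instance polyNormalizedGCDMonoid (K : Type*) [Field K] :
    NormalizedGCDMonoid (Polynomial K) :=
  letI := Classical.decEq K
  UniqueFactorizationMonoid.toNormalizedGCDMonoid _

/-- **Stabilizer lemma, part (ii).** Let `R` be a DVR with uniformizer `π`,
`L = K(α)` finite separable over the quotient field `K` of `R` with `α` integral over `R`,
`P` the minimal polynomial of `α` over `R`, `A = R[α]`, and `O_L` the integral closure of `R`
in `L`.  Let `f ∈ R[X]` be monic with `f̄ ∣ P̄`, write `P = fg + πT` with `T̄ ≠ 0`, and set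
`𝔞 = πA + f(α)A`.  If `h̄ = f̄/(f̄, T̄)` and `Ū = [h̄ḡ, f̄]`, then
`Stab_L(𝔞) = (𝔞 : 𝔞) = A + (U(α)/π)A ⊆ O_L`. -/
theorem stmt5 (R : Type*) [CommRing R] [IsDomain R] [IsDiscreteValuationRing R]
    (π : R) (hπ : Irreducible π)
    (K L : Type*) [Field K] [Field L] [Algebra R K] [IsFractionRing R K]
    [Algebra K L] [Algebra R L] [IsScalarTower R K L]
    [FiniteDimensional K L] [Algebra.IsSeparable K L]
    (α : L) (hα : IsIntegral R α) (hgen : Algebra.adjoin K {α} = ⊤)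
    (P : R[X]) (hP : P = minpoly R α)
    (A : Subalgebra R L) (hA : A = Algebra.adjoin R {α})
    (f g T h U : R[X]) (hf : f.Monic)
    (hfP : f.map (IsLocalRing.residue R) ∣ P.map (IsLocalRing.residue R))
    (hPfg : P = f * g + C π * T)
    (hT : T.map (IsLocalRing.residue R) ≠ 0)
    (hh : h.map (IsLocalRing.residue R) *
        gcd (f.map (IsLocalRing.residue R)) (T.map (IsLocalRing.residue R)) =
      f.map (IsLocalRing.residue R))
    (hU : U.map (IsLocalRing.residue R) =
      lcm (h.map (IsLocalRing.residue R) * g.map (IsLocalRing.residue R))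
        (f.map (IsLocalRing.residue R)))
    (𝔞 : Submodule R L)
    (h𝔞 : 𝔞 = Submodule.map (LinearMap.mulLeft R (algebraMap R L π))
        (Subalgebra.toSubmodule A) ⊔
      Submodule.map (LinearMap.mulLeft R (aeval α f)) (Subalgebra.toSubmodule A)) :
    𝔞 / 𝔞 = Subalgebra.toSubmodule A ⊔
        Submodule.map (LinearMap.mulLeft R (aeval α U * (algebraMap R L π)⁻¹))
          (Subalgebra.toSubmodule A) ∧
      𝔞 / 𝔞 ≤ Subalgebra.toSubmodule (integralClosure R L) := by
  set ρ : R →+* IsLocalRing.ResidueField R := IsLocalRing.residue R with hρdef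
  have hπ0 : π ≠ 0 := hπ.ne_zero
  have hinjRL : Function.Injective (algebraMap R L) := by
    rw [IsScalarTower.algebraMap_eq R K L]
    exact (algebraMap K L).injective.comp (IsFractionRing.injective R K)
  set π' : L := algebraMap R L π with hπ'def
  have hπ'0 : π' ≠ 0 := by
    rw [hπ'def, Ne, map_eq_zero_iff _ hinjRL]; exact hπ0
  have hρπ : ρ π = 0 := by
    rw [hρdef, IsLocalRing.residue_eq_zero_iff, hπ.maximalIdeal_eq]
    exact Ideal.mem_span_singleton_self π
  have hzero : ∀ V : R[X], V.map ρ = 0 ↔ C π ∣ V := by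
    intro V
    rw [Polynomial.C_dvd_iff_dvd_coeff]
    constructor
    · intro h0 n
      have h1 : (V.map ρ).coeff n = 0 := by rw [h0]; simp
      rw [Polynomial.coeff_map, hρdef, IsLocalRing.residue_eq_zero_iff,
        hπ.maximalIdeal_eq, Ideal.mem_span_singleton] at h1
      exact h1
    · intro hdvd
      ext n
      simp only [Polynomial.coeff_map, Polynomial.coeff_zero]
      rw [hρdef, IsLocalRing.residue_eq_zero_iff, hπ.maximalIdeal_eq,
        Ideal.mem_span_singleton]
      exact hdvd n
  have hlift : ∀ q : (IsLocalRing.ResidueField R)[X], ∃ Q : R[X], Q.map ρ = q :=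
    fun q => Polynomial.map_surjective ρ IsLocalRing.residue_surjective q
  haveI : NoZeroSMulDivisors R L := by
    refine ⟨fun {c x} hcx => ?_⟩
    rwa [Algebra.smul_def, mul_eq_zero, map_eq_zero_iff _ hinjRL] at hcx
  have haevalP : aeval α P = 0 := by rw [hP]; exact minpoly.aeval R α
  have hker : ∀ V : R[X], aeval α V = 0 → P ∣ V := by
    intro V hv
    rw [hP]
    exact minpoly.isIntegrallyClosed_dvd hα hv
  subst hA
  set A : Subalgebra R L := Algebra.adjoin R {α} with hA2
  have hmemA : ∀ z : L, z ∈ A ↔ ∃ V : R[X], aeval α V = z := by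
    intro z
    rw [hA2, Algebra.adjoin_singleton_eq_range_aeval]
    exact Iff.rfl
  have hPbar : P.map ρ = f.map ρ * g.map ρ := by
    rw [hPfg]
    simp [Polynomial.map_add, Polynomial.map_mul, Polynomial.map_C, hρπ]
  have hfbar_ne : f.map ρ ≠ 0 := (hf.map ρ).ne_zero
  have hmk : ∀ b c : L, b ∈ A → c ∈ A → π' * b + aeval α f * c ∈ 𝔞 := by
    intro b c hb hc
    rw [h𝔞]
    exact Submodule.add_mem_sup (Submodule.mem_map.mpr ⟨b, hb, rfl⟩)
      (Submodule.mem_map.mpr ⟨c, hc, rfl⟩)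
  have hdec : ∀ y ∈ 𝔞, ∃ b ∈ A, ∃ c ∈ A, y = π' * b + aeval α f * c := by
    intro y hy
    rw [h𝔞, Submodule.mem_sup] at hy
    obtain ⟨u, hu, v, hv, rfl⟩ := hy
    rw [Submodule.mem_map] at hu hv
    obtain ⟨b, hb, rfl⟩ := hu
    obtain ⟨c, hc, rfl⟩ := hv
    exact ⟨b, hb, c, hc, rfl⟩
  have hπ'mem : π' ∈ 𝔞 := by
    have := hmk 1 0 A.one_mem A.zero_mem
    simpa using this
  have hf𝔞 : aeval α f ∈ 𝔞 := by
    have := hmk 0 1 A.zero_mem A.one_mem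
    simpa using this
  have h𝔞A : ∀ y ∈ 𝔞, y ∈ A := by
    intro y hy
    obtain ⟨b, hb, c, hc, rfl⟩ := hdec y hy
    exact A.add_mem (A.mul_mem (A.algebraMap_mem π) hb)
      (A.mul_mem ((hmemA _).mpr ⟨f, rfl⟩) hc)
  -- membership characterization of 𝔞
  have hmem𝔞 : ∀ V : R[X], aeval α V ∈ 𝔞 ↔ f.map ρ ∣ V.map ρ := by
    intro V
    constructor
    · intro hv
      obtain ⟨b, hb, c, hc, hy⟩ := hdec _ hv
      obtain ⟨W, hW⟩ := (hmemA b).mp hb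
      obtain ⟨S, hS⟩ := (hmemA c).mp hc
      have key : aeval α (V - (C π * W + f * S)) = 0 := by
        simp only [map_sub, map_add, map_mul, aeval_C]
        rw [← hπ'def]
        linear_combination hy - π' * hW - aeval α f * hS
      obtain ⟨Q, hQ⟩ := hker _ key
      refine ⟨S.map ρ + g.map ρ * Q.map ρ, ?_⟩
      have := congrArg (Polynomial.map ρ) hQ
      simp only [Polynomial.map_sub, Polynomial.map_add, Polynomial.map_mul,
        Polynomial.map_C, hρπ, map_zero, Polynomial.C_0, zero_mul, hPbar] at this
      linear_combination this
    · intro hdvd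
      obtain ⟨q, hq⟩ := hdvd
      obtain ⟨Q, hQ⟩ := hlift q
      have h0 : (V - f * Q).map ρ = 0 := by
        simp [Polynomial.map_sub, Polynomial.map_mul, hq, hQ]
      obtain ⟨W, hW⟩ := (hzero _).mp h0
      have hV : V = C π * W + f * Q := by linear_combination hW
      have heq : aeval α V = π' * aeval α W + aeval α f * aeval α Q := by
        rw [hV]; simp only [map_add, map_mul, aeval_C, hπ'def]
      rw [heq]
      exact hmk _ _ ((hmemA _).mpr ⟨W, rfl⟩) ((hmemA _).mpr ⟨Q, rfl⟩)
  -- f̄ divides h̄ T̄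
  have hd0 : gcd (f.map ρ) (T.map ρ) ≠ 0 := by
    intro hc
    exact hfbar_ne (by rw [← hh, hc, mul_zero])
  obtain ⟨T₁, hT₁⟩ := gcd_dvd_right (f.map ρ) (T.map ρ)
  have hfhT : f.map ρ ∣ h.map ρ * T.map ρ :=
    ⟨T₁, by linear_combination h.map ρ * hT₁ + T₁ * hh⟩
  -- generic lemma: if f̄ ∣ W̄ then W(α)·A ⊆ 𝔞
  have hdvd_mem : ∀ W : R[X], f.map ρ ∣ W.map ρ → ∀ w ∈ A, aeval α W * w ∈ 𝔞 := by
    intro W hdvd w hw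
    obtain ⟨q, hq⟩ := hdvd
    obtain ⟨Q, hQ⟩ := hlift q
    have h0 : (W - f * Q).map ρ = 0 := by
      simp [Polynomial.map_sub, Polynomial.map_mul, hq, hQ]
    obtain ⟨S, hS⟩ := (hzero _).mp h0
    have hW : W = C π * S + f * Q := by linear_combination hS
    have heq : aeval α W * w = π' * (aeval α S * w) + aeval α f * (aeval α Q * w) := by
      rw [hW]; simp only [map_add, map_mul, aeval_C, hπ'def]; ring
    rw [heq]
    exact hmk _ _ (A.mul_mem ((hmemA _).mpr ⟨S, rfl⟩) hw)
      (A.mul_mem ((hmemA _).mpr ⟨Q, rfl⟩) hw)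
  -- the two "claims" for the ⊇ inclusion
  have claimU : ∀ w ∈ A, aeval α U * w ∈ 𝔞 := by
    refine hdvd_mem U ?_
    rw [hU]; exact dvd_lcm_right _ _
  have hhgU : h.map ρ * g.map ρ ∣ U.map ρ := by rw [hU]; exact dvd_lcm_left _ _
  obtain ⟨w₀bar, hw₀bar⟩ := hhgU
  obtain ⟨w₀, hw₀⟩ := hlift w₀bar
  have h0 : (U - h * g * w₀).map ρ = 0 := by
    simp only [Polynomial.map_sub, Polynomial.map_mul, hw₀, ← hw₀bar, sub_self]
  obtain ⟨s, hs⟩ := (hzero _).mp h0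
  have hU' : U = h * g * w₀ + C π * s := by linear_combination hs
  have hE : aeval α f * aeval α U = π' * aeval α (f * s - T * (h * w₀)) := by
    have hid : f * U = P * (h * w₀) + C π * (f * s - T * (h * w₀)) := by
      linear_combination f * hU' - (h * w₀) * hPfg
    have h1 := congrArg (aeval α) hid
    simp only [map_add, map_mul, map_sub, aeval_C] at h1
    rw [← hπ'def] at h1
    rw [haevalP, zero_mul, zero_add] at h1
    have hEexp : aeval α (f * s - T * (h * w₀)) =
        aeval α f * aeval α s - aeval α T * (aeval α h * aeval α w₀) := by
      simp only [map_sub, map_mul]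
    rw [hEexp]
    linear_combination h1
  have hfE : f.map ρ ∣ (f * s - T * (h * w₀)).map ρ := by
    rw [Polynomial.map_sub, Polynomial.map_mul, Polynomial.map_mul, Polynomial.map_mul]
    refine dvd_sub (dvd_mul_right _ _) ?_
    rw [show T.map ρ * (h.map ρ * w₀.map ρ) = h.map ρ * T.map ρ * w₀.map ρ by ring]
    exact hfhT.mul_right _
  have claimE : ∀ w ∈ A, aeval α U * aeval α f * π'⁻¹ * w ∈ 𝔞 := by
    intro w hw
    have hrw : aeval α U * aeval α f * π'⁻¹ = aeval α (f * s - T * (h * w₀)) := by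
      apply mul_right_cancel₀ hπ'0
      rw [mul_assoc, inv_mul_cancel₀ hπ'0, mul_one]
      linear_combination hE
    rw [hrw]
    exact hdvd_mem _ hfE w hw
  -- backward inclusion
  have hback : Subalgebra.toSubmodule A ⊔
      Submodule.map (LinearMap.mulLeft R (aeval α U * π'⁻¹))
        (Subalgebra.toSubmodule A) ≤ 𝔞 / 𝔞 := by
    refine sup_le ?_ ?_
    · intro z hz
      rw [Submodule.mem_div_iff_forall_mul_mem]
      intro y hy
      obtain ⟨b, hb, c, hc, rfl⟩ := hdec y hy
      have : z * (π' * b + aeval α f * c) = π' * (z * b) + aeval α f * (z * c) := by ring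
      rw [this]
      exact hmk _ _ (A.mul_mem hz hb) (A.mul_mem hz hc)
    · intro z hz
      rw [Submodule.mem_map] at hz
      obtain ⟨a, ha, rfl⟩ := hz
      rw [Submodule.mem_div_iff_forall_mul_mem]
      intro y hy
      obtain ⟨b, hb, c, hc, rfl⟩ := hdec y hy
      have hcalc : (LinearMap.mulLeft R (aeval α U * π'⁻¹)) a * (π' * b + aeval α f * c) =
          aeval α U * (a * b) + aeval α U * aeval α f * π'⁻¹ * (a * c) := by
        simp only [LinearMap.mulLeft_apply]
        field_simp
      rw [hcalc]
      exact 𝔞.add_mem (claimU _ (A.mul_mem ha hb)) (claimE _ (A.mul_mem ha hc))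
  -- forward inclusion
  have hfwd : 𝔞 / 𝔞 ≤ Subalgebra.toSubmodule A ⊔
      Submodule.map (LinearMap.mulLeft R (aeval α U * π'⁻¹))
        (Subalgebra.toSubmodule A) := by
    intro x hx
    have hx' := Submodule.mem_div_iff_forall_mul_mem.mp hx
    have hxπ : x * π' ∈ 𝔞 := hx' π' hπ'mem
    obtain ⟨V, hV⟩ := (hmemA _).mp (h𝔞A _ hxπ)
    have hfV : f.map ρ ∣ V.map ρ := (hmem𝔞 V).mp (by rw [hV]; exact hxπ)
    have hxf : x * aeval α f ∈ 𝔞 := hx' _ hf𝔞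
    obtain ⟨b, hb, c, hc, hbc⟩ := hdec _ hxf
    obtain ⟨B, hB⟩ := (hmemA b).mp hb
    obtain ⟨Cc, hC⟩ := (hmemA c).mp hc
    have key : aeval α (f * V - C π * (C π * B + f * Cc)) = 0 := by
      simp only [map_sub, map_add, map_mul, aeval_C]
      rw [← hπ'def]
      linear_combination aeval α f * hV + π' * hbc - π' * π' * hB - π' * aeval α f * hC
    obtain ⟨Q, hQ⟩ := hker _ key
    have h5 : V.map ρ = g.map ρ * Q.map ρ := by
      have := congrArg (Polynomial.map ρ) hQ
      simp only [Polynomial.map_sub, Polynomial.map_add, Polynomial.map_mul,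
        Polynomial.map_C, hρπ, Polynomial.C_0, zero_mul, hPbar] at this
      apply mul_left_cancel₀ hfbar_ne
      linear_combination this
    have h6 : (V - g * Q).map ρ = 0 := by
      simp [Polynomial.map_sub, Polynomial.map_mul, h5]
    obtain ⟨D, hD⟩ := (hzero _).mp h6
    have hCπ0 : (C π : R[X]) ≠ 0 := fun hc => hπ0 (by
      have := congrArg (fun p : R[X] => p.coeff 0) hc
      simpa using this)
    have h8 : C π * B + f * Cc = f * D - T * Q := by
      apply mul_left_cancel₀ hCπ0
      linear_combination (-1 : R[X]) * hQ - Q * hPfg + f * hD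
    have h9 : f.map ρ ∣ T.map ρ * Q.map ρ := by
      refine ⟨D.map ρ - Cc.map ρ, ?_⟩
      have := congrArg (Polynomial.map ρ) h8
      simp only [Polynomial.map_sub, Polynomial.map_add, Polynomial.map_mul,
        Polynomial.map_C, hρπ, Polynomial.C_0, zero_mul] at this
      linear_combination this
    have hcop : IsUnit (gcd (h.map ρ) T₁) :=
      isUnit_gcd_of_eq_mul_gcd (by linear_combination -hh) hT₁ hd0
    have hrel : IsRelPrime (h.map ρ) T₁ := gcd_isUnit_iff_isRelPrime.mp hcop
    have h10 : h.map ρ ∣ T₁ * Q.map ρ := by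
      have hdd : gcd (f.map ρ) (T.map ρ) * h.map ρ ∣
          gcd (f.map ρ) (T.map ρ) * (T₁ * Q.map ρ) := by
        obtain ⟨e, he⟩ := h9
        exact ⟨e, by linear_combination (-(Q.map ρ)) * hT₁ + he - e * hh⟩
      exact (mul_dvd_mul_iff_left hd0).mp hdd
    have h11 : h.map ρ ∣ Q.map ρ := hrel.dvd_of_dvd_mul_left h10
    obtain ⟨q₁, hq₁⟩ := h11
    have h12 : U.map ρ ∣ V.map ρ := by
      rw [hU]
      exact lcm_dvd ⟨q₁, by rw [h5, hq₁]; ring⟩ hfV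
    obtain ⟨m, hm⟩ := h12
    obtain ⟨M, hM⟩ := hlift m
    have h13 : (V - U * M).map ρ = 0 := by
      simp [Polynomial.map_sub, Polynomial.map_mul, hm, hM]
    obtain ⟨S, hS⟩ := (hzero _).mp h13
    have h14 : aeval α V = aeval α U * aeval α M + π' * aeval α S := by
      have h1 := congrArg (aeval α) (show V = U * M + C π * S by linear_combination hS)
      simp only [map_add, map_mul, aeval_C] at h1
      rw [← hπ'def] at h1
      exact h1
    have hxeq : x = aeval α U * π'⁻¹ * aeval α M + aeval α S := by
      apply mul_left_cancel₀ hπ'0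
      rw [show π' * x = aeval α V by rw [hV]; ring, h14]
      field_simp
    refine Submodule.mem_sup.mpr ⟨aeval α S, (hmemA _).mpr ⟨S, rfl⟩,
      aeval α U * π'⁻¹ * aeval α M,
      Submodule.mem_map.mpr ⟨aeval α M, (hmemA _).mpr ⟨M, rfl⟩, rfl⟩, ?_⟩
    rw [hxeq]; ring
  refine ⟨le_antisymm hfwd hback, ?_⟩
  intro x hx
  have hx' := Submodule.mem_div_iff_forall_mul_mem.mp hx
  have hfg𝔞 : 𝔞.FG := by
    rw [h𝔞]
    exact Submodule.FG.sup (Submodule.FG.map _ hα.fg_adjoin_singleton)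
      (Submodule.FG.map _ hα.fg_adjoin_singleton)
  have hbot : 𝔞 ≠ ⊥ := by
    intro hc
    rw [hc, Submodule.mem_bot] at hπ'mem
    exact hπ'0 hπ'mem
  exact isIntegral_of_smul_mem_submodule 𝔞 hbot hfg𝔞 x
    (fun n hn => by rw [smul_eq_mul]; exact hx' n hn)
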